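/- Let (S_t)_{t∈ℝ} and (T_t)_{t∈ℝ} be ergodic measure-preserving flows acting on (X, 𝓑, μ) and (Y, 𝓒, ν) respectively, where (X,d) is a σ-compact metric space with Borel probability measure μ and (Y, 𝓒, ν) is a standard probability Borel space. Let ρ be a Borel probability measure on X × Y with marginals μ and ν which is invariant under S_t × T_t for all t ∈ ℝ and ergodic for the single automorphism S₁ × T₁. Assume that (S_t) and (X,d) satisfy the almost-continuity condition (15). Let P ⊂ ℝ be a nonempty compact set, let A ∈ 𝓑 with μ(∂A) = 0, and let B ∈ 𝓒. Then for every ε, δ, κ > 0 there exist N = N(ε,δ,κ) ∈ ℕ and a measurable set Θ(ε,δ,κ) ⊂ X × Y with ρ(Θ(ε,δ,κ)) > 1 − δ such that for all M, L ∈ ℕ with L ≥ N and L/M ≥ κ, |(1/L) · Σ_{j=M}^{M+L} χ_{S_{−p}A × B}(S_j x, T_j y) − ρ(S_{−p}A × B)| < ε for all (x,y) ∈ Θ(ε,δ,κ) and all p ∈ P. (Lemma 5.4.) -/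

import Mathlib

open MeasureTheory Filter Set

set_option linter.unusedSectionVars false
namespace Stmt10Aux

variable {Z : Type*} [MeasurableSpace Z] {ρ : Measure Z} [IsProbabilityMeasure ρ]
variable {R : Z → Z} {f : Z → ℝ} {C : ℝ}

/-- Birkhoff sums. -/
noncomputable def bS (R : Z → Z) (f : Z → ℝ) (n : ℕ) (z : Z) : ℝ :=
  ∑ j ∈ Finset.range n, f (R^[j] z)

lemma bS_zero (R : Z → Z) (f : Z → ℝ) (z : Z) : bS R f 0 z = 0 := by simp [bS]

lemma bS_succ (R : Z → Z) (f : Z → ℝ) (n : ℕ) (z : Z) :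
    bS R f (n + 1) z = f z + bS R f n (R z) := by
  simp only [bS, Finset.sum_range_succ']
  simp [Function.iterate_succ_apply, add_comm]

lemma bS_measurable (hR : Measurable R) (hf : Measurable f) (n : ℕ) :
    Measurable (bS R f n) :=
  Finset.measurable_sum _ fun j _ => hf.comp (hR.iterate j)

lemma abs_bS_le (hC : ∀ z, |f z| ≤ C) (n : ℕ) (z : Z) : |bS R f n z| ≤ n * C := by
  calc |bS R f n z| ≤ ∑ j ∈ Finset.range n, |f (R^[j] z)| := Finset.abs_sum_le_sum_abs _ _
    _ ≤ ∑ _j ∈ Finset.range n, C := Finset.sum_le_sum fun j _ => hC _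
    _ = n * C := by simp [mul_comm]

/-- Running maxima of Birkhoff sums. -/
noncomputable def mS (R : Z → Z) (f : Z → ℝ) : ℕ → Z → ℝ
  | 0 => fun _ => 0
  | (N + 1) => fun z => max (mS R f N z) (bS R f (N + 1) z)

lemma mS_nonneg (R : Z → Z) (f : Z → ℝ) (N : ℕ) (z : Z) : 0 ≤ mS R f N z := by
  induction N with
  | zero => exact le_refl _
  | succ N ih => exact le_trans ih (le_max_left _ _)

lemma mS_measurable (hR : Measurable R) (hf : Measurable f) (N : ℕ) :
    Measurable (mS R f N) := by
  induction N with
  | zero => exact measurable_const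
  | succ N ih => exact ih.max (bS_measurable hR hf (N + 1))

lemma bS_le_mS {n N : ℕ} (hn : n ≤ N) (z : Z) : bS R f n z ≤ mS R f N z := by
  induction N with
  | zero => simp_all [bS_zero, mS]
  | succ N ih =>
    rcases Nat.lt_or_ge n (N + 1) with h | h
    · exact le_trans (ih (Nat.lt_succ_iff.1 h)) (le_max_left _ _)
    · have : n = N + 1 := le_antisymm hn h
      subst this; exact le_max_right _ _

lemma mS_exists (N : ℕ) (z : Z) : ∃ n ≤ N, mS R f N z = bS R f n z := by
  induction N with
  | zero => exact ⟨0, le_refl _, (bS_zero R f z).symm⟩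
  | succ N ih =>
    obtain ⟨n, hn, he⟩ := ih
    rcases le_total (bS R f (N + 1) z) (mS R f N z) with h | h
    · refine ⟨n, hn.trans (Nat.le_succ _), ?_⟩
      show max (mS R f N z) (bS R f (N + 1) z) = bS R f n z
      rw [max_eq_left h, he]
    · refine ⟨N + 1, le_refl _, ?_⟩
      show max (mS R f N z) (bS R f (N + 1) z) = bS R f (N + 1) z
      rw [max_eq_right h]

lemma key_pointwise (N : ℕ) (z : Z) :
    mS R f N z - mS R f N (R z) ≤ Set.indicator {w | 0 < mS R f N w} f z := by
  by_cases hz : 0 < mS R f N z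
  · simp only [Set.indicator_apply, Set.mem_setOf_eq, if_pos hz]
    obtain ⟨n, hn, he⟩ := mS_exists (R := R) (f := f) N z
    rcases n with _ | m
    · rw [he, bS_zero] at hz; exact absurd hz (lt_irrefl 0)
    · have hm : m ≤ N := le_trans (Nat.le_succ m) hn
      have : bS R f (m + 1) z = f z + bS R f m (R z) := bS_succ R f m z
      have h2 : bS R f m (R z) ≤ mS R f N (R z) := bS_le_mS hm (R z)
      rw [he, this]; linarith
  · simp only [Set.indicator_apply, Set.mem_setOf_eq, if_neg hz]
    have h0 : mS R f N z = 0 := le_antisymm (not_lt.1 hz) (mS_nonneg R f N z)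
    have := mS_nonneg R f N (R z)
    linarith

lemma integrable_of_bdd (hf : Measurable f) (hC : ∀ z, |f z| ≤ C) : Integrable f ρ :=
  ⟨hf.aestronglyMeasurable,
    HasFiniteIntegral.of_bounded (C := C) (ae_of_all _ fun z => by
      simpa [Real.norm_eq_abs] using hC z)⟩

lemma abs_mS_le (hC : ∀ z, |f z| ≤ C) (hC0 : 0 ≤ C) (N : ℕ) (z : Z) :
    |mS R f N z| ≤ N * C := by
  rw [abs_of_nonneg (mS_nonneg R f N z)]
  obtain ⟨n, hn, he⟩ := mS_exists (R := R) (f := f) N z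
  rw [he]
  calc bS R f n z ≤ |bS R f n z| := le_abs_self _
    _ ≤ n * C := abs_bS_le hC n z
    _ ≤ N * C := by
        have : (n : ℝ) ≤ N := Nat.cast_le.2 hn
        nlinarith

lemma integral_comp_eq (hRm : Measurable R) (hR : MeasurePreserving R ρ ρ)
    {g : Z → ℝ} (hg : Measurable g) : ∫ z, g (R z) ∂ρ = ∫ z, g z ∂ρ := by
  conv_rhs => rw [← hR.map_eq]
  exact (integral_map hRm.aemeasurable (hg.aestronglyMeasurable.mono_measure le_rfl)).symm

/-- Garsia's maximal ergodic inequality. -/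
lemma maximal (hRm : Measurable R) (hR : MeasurePreserving R ρ ρ)
    (hf : Measurable f) (hC : ∀ z, |f z| ≤ C) (hC0 : 0 ≤ C) (N : ℕ) :
    0 ≤ ∫ z, Set.indicator {w | 0 < mS R f N w} f z ∂ρ := by
  have hmSm := mS_measurable (f := f) hRm hf N
  have hEm : MeasurableSet {w | 0 < mS R f N w} := measurableSet_lt measurable_const hmSm
  have hMint : Integrable (mS R f N) ρ := integrable_of_bdd hmSm (abs_mS_le hC hC0 N)
  have hMRint : Integrable (fun z => mS R f N (R z)) ρ :=
    integrable_of_bdd (hmSm.comp hRm) (fun z => abs_mS_le hC hC0 N (R z))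
  have hIint : Integrable (Set.indicator {w | 0 < mS R f N w} f) ρ :=
    (integrable_of_bdd hf hC).indicator hEm
  have h1 : ∫ z, (mS R f N z - mS R f N (R z)) ∂ρ = 0 := by
    rw [integral_sub hMint hMRint, integral_comp_eq hRm hR hmSm, sub_self]
  calc (0 : ℝ) = ∫ z, (mS R f N z - mS R f N (R z)) ∂ρ := h1.symm
    _ ≤ ∫ z, Set.indicator {w | 0 < mS R f N w} f z ∂ρ :=
        integral_mono (hMint.sub hMRint) hIint (fun z => key_pointwise N z)

end Stmt10Aux

namespace Stmt10Aux

variable {Z : Type*} [MeasurableSpace Z] {ρ : Measure Z} [IsProbabilityMeasure ρ]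
variable {R : Z → Z} {f : Z → ℝ} {C : ℝ}

lemma mS_mono (N : ℕ) (z : Z) : mS R f N z ≤ mS R f (N + 1) z := le_max_left _ _

lemma mS_mono' {N N' : ℕ} (h : N ≤ N') (z : Z) : mS R f N z ≤ mS R f N' z := by
  induction N' with
  | zero => simp_all
  | succ N' ih =>
    rcases Nat.lt_or_ge N (N' + 1) with h' | h'
    · exact le_trans (ih (Nat.lt_succ_iff.1 h')) (mS_mono N' z)
    · have : N = N' + 1 := le_antisymm h h'
      subst this; exact le_refl _

/-- The maximal inequality over the union set. -/
lemma maximal_iUnion (hRm : Measurable R) (hR : MeasurePreserving R ρ ρ)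
    (hf : Measurable f) (hC : ∀ z, |f z| ≤ C) (hC0 : 0 ≤ C) :
    0 ≤ ∫ z, Set.indicator {w | ∃ n, 1 ≤ n ∧ 0 < bS R f n w} f z ∂ρ := by
  set F := {w | ∃ n, 1 ≤ n ∧ 0 < bS R f n w} with hFdef
  have hmSm : ∀ N, Measurable (mS R f N) := mS_measurable hRm hf
  have hEm : ∀ N : ℕ, MeasurableSet {w | 0 < mS R f N w} :=
    fun N => measurableSet_lt measurable_const (hmSm N)
  have hFm : MeasurableSet F := by
    have : F = ⋃ n : ℕ, {w | 1 ≤ n ∧ 0 < bS R f n w} := by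
      ext w; simp [hFdef]
    rw [this]
    exact MeasurableSet.iUnion fun n =>
      (MeasurableSet.const _).inter (measurableSet_lt measurable_const (bS_measurable hRm hf n))
  -- membership characterization
  have hmem : ∀ z, z ∈ F ↔ ∃ N, 0 < mS R f N z := by
    intro z
    constructor
    · rintro ⟨n, hn1, hnp⟩
      exact ⟨n, lt_of_lt_of_le hnp (bS_le_mS (le_refl n) z)⟩
    · rintro ⟨N, hN⟩
      obtain ⟨n, hn, he⟩ := mS_exists (R := R) (f := f) N z
      rcases n with _ | m
      · rw [he, bS_zero] at hN; exact absurd hN (lt_irrefl 0)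
      · exact ⟨m + 1, Nat.succ_le_succ (Nat.zero_le m), he ▸ hN⟩
  -- pointwise convergence of indicators
  have hconv : ∀ z, Tendsto (fun N => Set.indicator {w | 0 < mS R f N w} f z) atTop
      (nhds (Set.indicator F f z)) := by
    intro z
    by_cases hz : z ∈ F
    · obtain ⟨N₀, hN₀⟩ := (hmem z).1 hz
      have hev : ∀ᶠ N in atTop, Set.indicator F f z
          = Set.indicator {w | 0 < mS R f N w} f z := by
        filter_upwards [eventually_ge_atTop N₀] with N hN
        have h1 : z ∈ {w | 0 < mS R f N w} := lt_of_lt_of_le hN₀ (mS_mono' hN z)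
        rw [Set.indicator_of_mem h1 f, Set.indicator_of_mem hz f]
      exact Tendsto.congr' hev tendsto_const_nhds
    · have hev : ∀ N : ℕ, Set.indicator {w | 0 < mS R f N w} f z
          = Set.indicator F f z := by
        intro N
        have h1 : z ∉ {w | 0 < mS R f N w} := fun h => hz ((hmem z).2 ⟨N, h⟩)
        rw [Set.indicator_of_notMem h1 f, Set.indicator_of_notMem hz f]
      exact Tendsto.congr (fun N => (hev N).symm) tendsto_const_nhds
  -- dominated convergence
  have hT : Tendsto (fun N => ∫ z, Set.indicator {w | 0 < mS R f N w} f z ∂ρ) atTop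
      (nhds (∫ z, Set.indicator F f z ∂ρ)) := by
    refine tendsto_integral_of_dominated_convergence (fun _ => C)
      (fun N => ((hf.indicator (hEm N)).aestronglyMeasurable))
      (integrable_const C) (fun N => ae_of_all _ fun z => ?_) (ae_of_all _ hconv)
    rw [Real.norm_eq_abs]
    calc |Set.indicator {w | 0 < mS R f N w} f z| ≤ |f z| := by
          simp only [Set.indicator_apply]
          split
          · exact le_refl _
          · simp [abs_nonneg]
      _ ≤ C := hC z
  exact ge_of_tendsto hT (Eventually.of_forall fun N => maximal hRm hR hf hC hC0 N)

end Stmt10Aux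

namespace Stmt10Aux

variable {Z : Type*} [MeasurableSpace Z] {ρ : Measure Z} [IsProbabilityMeasure ρ]
variable {R : Z → Z} {f : Z → ℝ} {C : ℝ}

lemma bddU {u : ℕ → ℝ} {C : ℝ} (h : ∀ n, |u n| ≤ C) :
    IsBoundedUnder (· ≤ ·) atTop u :=
  isBoundedUnder_of ⟨C, fun n => (abs_le.1 (h n)).2⟩

lemma bddL {u : ℕ → ℝ} {C : ℝ} (h : ∀ n, |u n| ≤ C) :
    IsBoundedUnder (· ≥ ·) atTop u :=
  isBoundedUnder_of ⟨-C, fun n => (abs_le.1 (h n)).1⟩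

lemma limsup_le_aux {u v : ℕ → ℝ} {C : ℝ}
    (hu : ∀ n, |u n| ≤ C) (hv : ∀ n, |v n| ≤ C)
    (h : Tendsto (fun n => u n - v n) atTop (nhds 0)) :
    limsup u atTop ≤ limsup v atTop := by
  refine le_of_forall_pos_le_add fun δ hδ => ?_
  have hev : ∀ᶠ n in atTop, u n ≤ v n + δ := by
    have h2 := (Metric.tendsto_atTop.1 h) δ hδ
    obtain ⟨N, hN⟩ := h2
    filter_upwards [eventually_ge_atTop N] with n hn
    have := hN n hn
    rw [Real.dist_eq, sub_zero] at this
    have := (abs_lt.1 this).2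
    linarith
  have h1 : limsup u atTop ≤ limsup (fun n => v n + δ) atTop := by
    refine limsup_le_limsup hev ?_ ?_
    · exact (bddL hu).isCoboundedUnder_le
    · exact isBoundedUnder_of ⟨C + δ, fun n => add_le_add (abs_le.1 (hv n)).2 le_rfl⟩
  have h2 : limsup (fun n => v n + δ) atTop = limsup v atTop + δ :=
    limsup_add_const atTop v δ (bddU hv) ((bddL hv).isCoboundedUnder_le)
  rw [h2] at h1; exact h1

lemma limsup_eq_limsup_of_sub_tendsto {u v : ℕ → ℝ} {C : ℝ}
    (hu : ∀ n, |u n| ≤ C) (hv : ∀ n, |v n| ≤ C)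
    (h : Tendsto (fun n => u n - v n) atTop (nhds 0)) :
    limsup u atTop = limsup v atTop := by
  refine le_antisymm (limsup_le_aux hu hv h) (limsup_le_aux hv hu ?_)
  have := h.neg
  simp only [neg_zero, neg_sub] at this
  exact this

lemma F_meas (hRm : Measurable R) (hf : Measurable f) :
    MeasurableSet {w : Z | ∃ n, 1 ≤ n ∧ 0 < bS R f n w} := by
  have : {w : Z | ∃ n, 1 ≤ n ∧ 0 < bS R f n w}
      = ⋃ n : ℕ, {w | 1 ≤ n ∧ 0 < bS R f n w} := by ext w; simp
  rw [this]
  exact MeasurableSet.iUnion fun n =>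
    (MeasurableSet.const _).inter (measurableSet_lt measurable_const (bS_measurable hRm hf n))

lemma abs_A_le (hC : ∀ z, |f z| ≤ C) (hC0 : 0 ≤ C) (n : ℕ) (z : Z) :
    |(n : ℝ)⁻¹ * bS R f n z| ≤ C := by
  rcases Nat.eq_zero_or_pos n with h | h
  · subst h; simp [bS_zero, hC0]
  · have hn : (0:ℝ) < n := by exact_mod_cast h
    rw [abs_mul, abs_inv, abs_of_pos hn]
    calc (n:ℝ)⁻¹ * |bS R f n z| ≤ (n:ℝ)⁻¹ * (n * C) := by
          apply mul_le_mul_of_nonneg_left (abs_bS_le hC n z) (by positivity)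
      _ = C := by field_simp

lemma A_measurable (hRm : Measurable R) (hf : Measurable f) (n : ℕ) :
    Measurable (fun z => (n : ℝ)⁻¹ * bS R f n z) :=
  (bS_measurable hRm hf n).const_mul _

/-- Exact invariance of the limsup of Birkhoff averages. -/
lemma limsup_invariant (hC : ∀ z, |f z| ≤ C) (hC0 : 0 ≤ C) (z : Z) :
    limsup (fun n : ℕ => (n : ℝ)⁻¹ * bS R f n (R z)) atTop
      = limsup (fun n : ℕ => (n : ℝ)⁻¹ * bS R f n z) atTop := by
  set u : ℕ → ℝ := fun n : ℕ => (n : ℝ)⁻¹ * bS R f n (R z) with hu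
  set v : ℕ → ℝ := fun n => ((n + 1 : ℕ) : ℝ)⁻¹ * bS R f (n + 1) z with hv
  have h1 : limsup u atTop = limsup v atTop := by
    refine limsup_eq_limsup_of_sub_tendsto (C := C)
      (fun n => abs_A_le hC hC0 n (R z)) (fun n => abs_A_le hC hC0 (n + 1) z) ?_
    apply squeeze_zero_norm' (a := fun n : ℕ => (2 * C) * (n : ℝ)⁻¹)
    · filter_upwards [eventually_ge_atTop 1] with n hn
      have hnr : (1:ℝ) ≤ (n:ℝ) := by exact_mod_cast hn
      have hnr0 : (0:ℝ) < (n:ℝ) := by linarith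
      have hbs : bS R f (n + 1) z = f z + bS R f n (R z) := bS_succ R f n z
      set s := bS R f n (R z) with hs
      have hsb : |s| ≤ n * C := abs_bS_le hC n (R z)
      have hfb : |f z| ≤ C := hC z
      have he : u n - v n = (s - (n:ℝ) * f z) / ((n:ℝ) * ((n:ℝ) + 1)) := by
        rw [hu, hv]
        simp only [hbs]
        push_cast
        field_simp
        ring
      rw [Real.norm_eq_abs, he, abs_div, abs_of_pos (by positivity : (0:ℝ) < (n:ℝ) * ((n:ℝ)+1))]
      have hnum : |s - (n:ℝ) * f z| ≤ 2 * (n:ℝ) * C := by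
        have h3 : |s - (n:ℝ) * f z| ≤ |s| + |(n:ℝ) * f z| := by
          rw [sub_eq_add_neg]
          exact (abs_add_le _ _).trans (by rw [abs_neg])
        have h4 : |(n:ℝ) * f z| = (n:ℝ) * |f z| := by
          rw [abs_mul, abs_of_pos hnr0]
        nlinarith
      calc |s - (n:ℝ) * f z| / ((n:ℝ) * ((n:ℝ) + 1)) ≤ (2 * (n:ℝ) * C) / ((n:ℝ) * ((n:ℝ) + 1)) := by
            gcongr
        _ = (2 * C) / ((n:ℝ) + 1) := by field_simp
        _ ≤ (2 * C) * (n:ℝ)⁻¹ := by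
            rw [div_eq_mul_inv]
            have hle : ((n:ℝ) + 1)⁻¹ ≤ (n:ℝ)⁻¹ := by
              rw [inv_le_inv₀ (by linarith) hnr0]; linarith
            exact mul_le_mul_of_nonneg_left hle (by positivity)
    · have := tendsto_inv_atTop_nhds_zero_nat.const_mul (2 * C)
      simpa using this
  have h2 : limsup v atTop = limsup (fun n : ℕ => (n : ℝ)⁻¹ * bS R f n z) atTop := by
    have hmap : Filter.map (fun n : ℕ => n + 1) atTop = atTop := Filter.map_add_atTop_eq_nat 1
    calc limsup v atTop
        = limsSup (Filter.map (fun n => ((n:ℕ):ℝ)⁻¹ * bS R f n z) (Filter.map (fun n : ℕ => n + 1) atTop)) := by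
          rw [Filter.map_map]; rfl
      _ = limsup (fun n : ℕ => (n : ℝ)⁻¹ * bS R f n z) atTop := by rw [hmap]; rfl
  rw [h1, h2]

end Stmt10Aux

namespace Stmt10Aux

variable {Z : Type*} [MeasurableSpace Z] {ρ : Measure Z} [IsProbabilityMeasure ρ]
variable {R : Z → Z} {f : Z → ℝ} {C : ℝ}

lemma birkhoff_limsup (hRm : Measurable R) (herg : Ergodic R ρ)
    (hf : Measurable f) (hC : ∀ z, |f z| ≤ C) (hC0 : 0 ≤ C) :
    ∀ᵐ z ∂ρ, limsup (fun n : ℕ => (n : ℝ)⁻¹ * bS R f n z) atTop ≤ ∫ w, f w ∂ρ := by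
  set c := ∫ w, f w ∂ρ with hc
  set φ : Z → ℝ := fun z => limsup (fun n : ℕ => (n : ℝ)⁻¹ * bS R f n z) atTop with hφ
  have hφm : Measurable φ := Measurable.limsup (A_measurable hRm hf)
  have hφR : ∀ z, φ (R z) = φ z := fun z => limsup_invariant hC hC0 z
  have hfint : Integrable f ρ := integrable_of_bdd hf hC
  have key : ∀ ε : ℝ, 0 < ε → ρ {z | c + ε < φ z} = 0 := by
    intro ε hε
    have hEmeas : MeasurableSet {z | c + ε < φ z} :=
      measurableSet_lt measurable_const hφm
    have hEinv : R ⁻¹' {z | c + ε < φ z} = {z | c + ε < φ z} := by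
      ext z; simp only [Set.mem_preimage, Set.mem_setOf_eq, hφR z]
    rcases herg.ae_empty_or_univ hEmeas hEinv with h | h
    · rw [measure_congr h]; exact measure_empty
    · exfalso
      have hE1 : ρ {z | c + ε < φ z} = 1 := by rw [measure_congr h, measure_univ]
      set g : Z → ℝ := fun z => f z - (c + ε) with hg
      have hgm : Measurable g := hf.sub measurable_const
      have hgC : ∀ z, |g z| ≤ C + |c + ε| := by
        intro z
        rw [hg]
        simp only
        rw [sub_eq_add_neg]
        exact (abs_add_le _ _).trans (by rw [abs_neg]; exact add_le_add (hC z) le_rfl)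
      have hbSg : ∀ n (z : Z), bS R g n z = bS R f n z - n * (c + ε) := by
        intro n z
        simp only [bS, hg, Finset.sum_sub_distrib, Finset.sum_const, Finset.card_range,
          nsmul_eq_mul]
      set F := {w : Z | ∃ n, 1 ≤ n ∧ 0 < bS R g n w} with hF
      have hEF : {z | c + ε < φ z} ⊆ F := by
        intro z hz
        have hcob : IsCoboundedUnder (· ≤ ·) atTop (fun n : ℕ => (n : ℝ)⁻¹ * bS R f n z) :=
          (bddL (fun n => abs_A_le hC hC0 n z)).isCoboundedUnder_le
        have hfreq := frequently_lt_of_lt_limsup hcob hz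
        obtain ⟨n, hn1, hn⟩ := (frequently_atTop.1 hfreq) 1
        refine ⟨n, hn1, ?_⟩
        rw [hbSg]
        have hnpos : (0:ℝ) < n := by exact_mod_cast hn1
        have hbs : bS R f n z = n * ((n : ℝ)⁻¹ * bS R f n z) := by
          field_simp
        rw [hbs]
        have := mul_lt_mul_of_pos_left hn hnpos
        nlinarith
      have hFm : MeasurableSet F := F_meas hRm hgm
      have hF1 : ρ F = 1 := le_antisymm prob_le_one (hE1 ▸ measure_mono hEF)
      have hnn := maximal_iUnion hRm herg.toMeasurePreserving hgm hgC (by positivity)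
      have hFc : ρ Fᶜ = 0 := by
        rw [prob_compl_eq_one_sub hFm, hF1, tsub_self]
      have hae : Set.indicator F g =ᵐ[ρ] g := by
        have hmem : ∀ᵐ z ∂ρ, z ∈ F := by
          rw [ae_iff]
          exact hFc
        filter_upwards [hmem] with z hz
        rw [Set.indicator_of_mem hz]
      have heq : ∫ z, Set.indicator F g z ∂ρ = ∫ z, g z ∂ρ := integral_congr_ae hae
      have hgint : ∫ z, g z ∂ρ = -ε := by
        rw [hg]
        simp only
        rw [integral_sub hfint (integrable_const _), integral_const, ← hc]
        simp [measure_univ]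
      rw [heq, hgint] at hnn
      linarith
  have haeall : ∀ᵐ z ∂ρ, ∀ k : ℕ, ¬ (c + ((k : ℝ) + 1)⁻¹ < φ z) := by
    rw [ae_all_iff]
    intro k
    have hk := key ((k : ℝ) + 1)⁻¹ (by positivity)
    rw [ae_iff]
    simpa using hk
  filter_upwards [haeall] with z hz
  by_contra hlt
  push_neg at hlt
  obtain ⟨k, hk⟩ := exists_nat_one_div_lt (show (0:ℝ) < φ z - c by linarith)
  exact hz k (by rw [← one_div]; linarith)

theorem birkhoff_ae (hRm : Measurable R) (herg : Ergodic R ρ)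
    (hf : Measurable f) (hC : ∀ z, |f z| ≤ C) (hC0 : 0 ≤ C) :
    ∀ᵐ z ∂ρ, Tendsto (fun n : ℕ => (n : ℝ)⁻¹ * bS R f n z) atTop
      (nhds (∫ w, f w ∂ρ)) := by
  have h1 := birkhoff_limsup hRm herg hf hC hC0
  have h2 := birkhoff_limsup hRm herg hf.neg
    (f := fun w => -f w) (fun z => by simpa using hC z) hC0
  have hbSneg : ∀ n (z : Z), bS R (fun w => -f w) n z = - bS R f n z := by
    intro n z; simp [bS]
  have hint : ∫ w, -f w ∂ρ = - ∫ w, f w ∂ρ := integral_neg f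
  filter_upwards [h1, h2] with z hz1 hz2
  set u : ℕ → ℝ := fun n : ℕ => (n : ℝ)⁻¹ * bS R f n z with huu
  have hu_bd : ∀ n, |u n| ≤ C := fun n => abs_A_le hC hC0 n z
  have h2' : limsup (fun n => -(u n)) atTop ≤ - ∫ w, f w ∂ρ := by
    have : (fun n : ℕ => (n : ℝ)⁻¹ * bS R (fun w => -f w) n z) = fun n => -(u n) := by
      funext n; rw [hbSneg]; ring
    rw [this, hint] at hz2
    exact hz2
  have hmap : -(liminf u atTop) = limsup (fun n => -(u n)) atTop := by
    have := Antitone.map_liminf_of_continuousAt (F := atTop) (f := fun x : ℝ => -x)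
      (fun a b h => neg_le_neg h) u (continuous_neg.continuousAt)
      ((bddU hu_bd).isCoboundedUnder_ge) (bddL hu_bd)
    exact this
  have hliminf : ∫ w, f w ∂ρ ≤ liminf u atTop := by
    have : -(liminf u atTop) ≤ - ∫ w, f w ∂ρ := hmap ▸ h2'
    linarith
  exact tendsto_of_le_liminf_of_limsup_le hliminf hz1 (bddU hu_bd) (bddL hu_bd)

end Stmt10Aux

namespace Stmt10Aux

variable {Z : Type*} [MeasurableSpace Z] {ρ : Measure Z} [IsProbabilityMeasure ρ]
variable {R : Z → Z} {f : Z → ℝ} {C : ℝ}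

/-- Uniform Birkhoff convergence on a large set, via Egorov. -/
lemma birkhoff_unif (hRm : Measurable R) (herg : Ergodic R ρ)
    (hf : Measurable f) (hC : ∀ z, |f z| ≤ C) (hC0 : 0 ≤ C)
    {ε δ : ℝ} (hε : 0 < ε) (hδ : 0 < δ) :
    ∃ N : ℕ, ∃ Θ : Set Z, MeasurableSet Θ ∧ ρ Θᶜ ≤ ENNReal.ofReal δ ∧
      ∀ n, N ≤ n → ∀ z ∈ Θ, |(n : ℝ)⁻¹ * bS R f n z - ∫ w, f w ∂ρ| < ε := by
  have hae := birkhoff_ae hRm herg hf hC hC0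
  obtain ⟨t, -, htm, htμ, hunif⟩ :=
    tendstoUniformlyOn_of_ae_tendsto
      (f := fun n : ℕ => fun z => (n : ℝ)⁻¹ * bS R f n z)
      (g := fun _ => ∫ w, f w ∂ρ) (s := Set.univ) (μ := ρ)
      (fun n => (A_measurable hRm hf n).stronglyMeasurable)
      stronglyMeasurable_const MeasurableSet.univ (measure_ne_top _ _)
      (by filter_upwards [hae] with z hz _; exact hz) hδ
  have hev := Metric.tendstoUniformlyOn_iff.1 hunif ε hε
  obtain ⟨N, hN⟩ := eventually_atTop.1 hev
  refine ⟨N, Set.univ \ t, MeasurableSet.univ.diff htm, ?_, ?_⟩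
  · have hsub : (Set.univ \ t)ᶜ ⊆ t := by
      intro z hz
      by_contra hzt
      exact hz ⟨Set.mem_univ z, hzt⟩
    exact (measure_mono hsub).trans htμ
  · intro n hn z hz
    have := hN n hn z hz
    rw [Real.dist_eq] at this
    rw [abs_sub_comm] at this
    exact this

end Stmt10Aux

namespace Stmt10Aux

variable {Z : Type*} [MeasurableSpace Z] {ρ : Measure Z} [IsProbabilityMeasure ρ]
variable {R : Z → Z} {f : Z → ℝ} {C : ℝ}

private lemma abs_sub_le' (x y : ℝ) : |x - y| ≤ |x| + |y| := by
  rw [sub_eq_add_neg]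
  exact (abs_add_le _ _).trans (by rw [abs_neg])

/-- Uniform control of window averages of Birkhoff sums. -/
lemma birkhoff_window (hRm : Measurable R) (herg : Ergodic R ρ)
    (hf : Measurable f) (hC : ∀ z, |f z| ≤ 1)
    {ε δ κ : ℝ} (hε : 0 < ε) (hδ : 0 < δ) (hκ : 0 < κ) :
    ∃ N : ℕ, ∃ Θ : Set Z, MeasurableSet Θ ∧ ρ Θᶜ ≤ ENNReal.ofReal δ ∧
      ∀ M L : ℕ, N ≤ L → κ ≤ (L : ℝ) / (M : ℝ) → ∀ z ∈ Θ,
        |(1 / (L : ℝ)) * (∑ j ∈ Finset.Icc M (M + L), f (R^[j] z)) - ∫ w, f w ∂ρ| < ε := by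
  set c := ∫ w, f w ∂ρ with hc
  have hcb : |c| ≤ 1 := by
    rw [hc]
    calc |∫ w, f w ∂ρ| ≤ ∫ w, |f w| ∂ρ := by
          simpa [Real.norm_eq_abs] using norm_integral_le_integral_norm (μ := ρ) f
      _ ≤ ∫ _w, (1:ℝ) ∂ρ :=
          integral_mono (integrable_of_bdd hf hC).abs (integrable_const 1) (fun z => hC z)
      _ = 1 := by simp
  set ε₂ := ε / (4 * (1/κ + 2)) with hε₂def
  have hKpos : (0:ℝ) < 1/κ + 2 := by positivity
  have hε₂ : 0 < ε₂ := by positivity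
  obtain ⟨N₀, Θ, hΘm, hΘμ, hΘ⟩ := birkhoff_unif hRm herg hf hC one_pos.le hε₂ hδ
  set N := max (max N₀ 1) ⌈(2 * (N₀:ℝ) + 1) * 8 / ε⌉₊ with hN
  have hN₀N : N₀ ≤ N := le_trans (le_max_left N₀ 1) (le_max_left _ _)
  have hN1 : 1 ≤ N := le_trans (le_max_right N₀ 1) (le_max_left _ _)
  refine ⟨N, Θ, hΘm, hΘμ, ?_⟩
  intro M L hNL hκL z hz
  have hL1 : 1 ≤ L := le_trans hN1 hNL
  have hLr : (0:ℝ) < L := by exact_mod_cast hL1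
  have hM1 : 1 ≤ M := by
    rcases Nat.eq_zero_or_pos M with h | h
    · exfalso
      subst h
      rw [Nat.cast_zero, div_zero] at hκL
      linarith
    · exact h
  have hMr : (0:ℝ) < M := by exact_mod_cast hM1
  have hMLκ : (M:ℝ) / L ≤ 1/κ := by
    rw [div_le_div_iff₀ hLr hκ]
    have := (le_div_iff₀ hMr).1 hκL
    nlinarith
  have hNL' : (2 * (N₀:ℝ) + 1) * 8 / ε ≤ (L:ℝ) := by
    have h1 : ((2 * (N₀:ℝ) + 1) * 8 / ε) ≤ (⌈(2 * (N₀:ℝ) + 1) * 8 / ε⌉₊ : ℝ) := Nat.le_ceil _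
    have h2 : (⌈(2 * (N₀:ℝ) + 1) * 8 / ε⌉₊ : ℝ) ≤ (N : ℝ) := by
      exact_mod_cast le_trans (le_max_right _ _) (le_refl N)
    have h3 : (N:ℝ) ≤ (L:ℝ) := by exact_mod_cast hNL
    linarith
  have hinvL : 1 / (L:ℝ) ≤ ε / 8 := by
    rw [div_le_div_iff₀ hLr (by norm_num : (0:ℝ) < 8)]
    have hN₀0 : (0:ℝ) ≤ (N₀:ℝ) := Nat.cast_nonneg _
    have h4 := (div_le_iff₀ hε).1 hNL'
    have h5 : (L:ℝ) * ε = ε * (L:ℝ) := mul_comm _ _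
    linarith
  -- the window sum via Birkhoff sums
  have hsum : ∑ j ∈ Finset.Icc M (M + L), f (R^[j] z)
      = bS R f (M + L + 1) z - bS R f M z := by
    have h1 : Finset.Icc M (M + L) = Finset.Ico M (M + L + 1) :=
      (Finset.Ico_add_one_right_eq_Icc M (M + L)).symm
    rw [h1, bS, bS, Finset.sum_Ico_eq_sub _ (by omega)]
  set a := ((M + L + 1 : ℕ) : ℝ)⁻¹ * bS R f (M + L + 1) z with haa
  set b := ((M : ℕ) : ℝ)⁻¹ * bS R f M z with hbb
  have ha : |a - c| < ε₂ := hΘ (M + L + 1) (by omega) z hz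
  have hb1 : |b| ≤ 1 := abs_A_le hC one_pos.le M z
  have hbSa : bS R f (M + L + 1) z = ((M + L + 1 : ℕ) : ℝ) * a := by
    rw [haa]
    have : ((M + L + 1 : ℕ) : ℝ) ≠ 0 := by positivity
    field_simp
  have hbSb : bS R f M z = ((M : ℕ) : ℝ) * b := by
    rw [hbb]
    field_simp
  have heq : (1 / (L : ℝ)) * (∑ j ∈ Finset.Icc M (M + L), f (R^[j] z)) - c
      = (((M:ℝ) + L + 1) / L) * (a - c) - ((M:ℝ)/L) * (b - c) + c / L := by
    rw [hsum, hbSa, hbSb]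
    push_cast
    field_simp
    ring
  rw [heq]
  set q1 := ((M:ℝ) + L + 1) / L with hq1def
  set q2 := (M:ℝ) / L with hq2def
  have hq1n : 0 ≤ q1 := by positivity
  have hq2n : 0 ≤ q2 := by positivity
  have htri : |q1 * (a - c) - q2 * (b - c) + c / L|
      ≤ q1 * |a - c| + q2 * |b - c| + |c| / L := by
    calc |q1 * (a - c) - q2 * (b - c) + c / L|
        ≤ |q1 * (a - c) - q2 * (b - c)| + |c / L| := abs_add_le _ _
      _ ≤ |q1 * (a - c)| + |q2 * (b - c)| + |c / L| := by
          have := abs_sub_le' (q1 * (a - c)) (q2 * (b - c))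
          linarith
      _ = q1 * |a - c| + q2 * |b - c| + |c| / L := by
          rw [abs_mul, abs_mul, abs_of_nonneg hq1n, abs_of_nonneg hq2n, abs_div,
            abs_of_pos hLr]
  have hq1b : q1 ≤ 1/κ + 2 := by
    have h1 : q1 = (M:ℝ)/L + 1 + 1/L := by rw [hq1def]; field_simp
    have h2 : 1 / (L:ℝ) ≤ 1 := by
      rw [div_le_one hLr]; exact_mod_cast hL1
    linarith
  have he1 : (1/κ + 2) * ε₂ = ε / 4 := by
    rw [hε₂def]
    field_simp
  have hterm1 : q1 * |a - c| ≤ ε / 4 := by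
    calc q1 * |a - c| ≤ (1/κ + 2) * ε₂ :=
          mul_le_mul hq1b ha.le (abs_nonneg _) hKpos.le
      _ = ε / 4 := he1
  have htermc : |c| / L ≤ 1 / L := by gcongr
  have hfinal : q1 * |a - c| + q2 * |b - c| + |c| / L < ε := by
    by_cases hcase : N₀ ≤ M
    · have hbc : |b - c| < ε₂ := hΘ M hcase z hz
      have hterm2 : q2 * |b - c| ≤ ε / 4 := by
        calc q2 * |b - c| ≤ (1/κ) * ε₂ :=
              mul_le_mul hMLκ hbc.le (abs_nonneg _) (by positivity)
          _ ≤ (1/κ + 2) * ε₂ :=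
              mul_le_mul_of_nonneg_right (by linarith) hε₂.le
          _ = ε / 4 := he1
      have : |c| / L ≤ ε / 8 := le_trans htermc hinvL
      linarith
    · push_neg at hcase
      have hbc2 : |b - c| ≤ 2 := by
        have := abs_sub_le' b c
        linarith
      have hMN₀ : (M:ℝ) ≤ (N₀:ℝ) := by exact_mod_cast hcase.le
      have hterm2 : q2 * |b - c| ≤ 2 * (N₀:ℝ) / L := by
        calc q2 * |b - c| ≤ q2 * 2 := mul_le_mul_of_nonneg_left hbc2 hq2n
          _ ≤ 2 * (N₀:ℝ) / L := by
              rw [hq2def]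
              rw [div_mul_eq_mul_div, mul_comm]
              gcongr
      have hsmall : 2 * (N₀:ℝ) / L + 1 / L ≤ ε / 8 := by
        rw [← add_div, div_le_div_iff₀ hLr (by norm_num : (0:ℝ) < 8)]
        have h4 := (div_le_iff₀ hε).1 hNL'
        have h5 : (L:ℝ) * ε = ε * (L:ℝ) := mul_comm _ _
        linarith
      linarith
  exact lt_of_le_of_lt htri hfinal

end Stmt10Aux

namespace Stmt10Aux

lemma exists_thickening_small {X : Type*} [MetricSpace X] [MeasurableSpace X] [BorelSpace X]
    (μ : Measure X) [IsFiniteMeasure μ] (A : Set X) (hfr : μ (frontier A) = 0)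
    {η : ℝ} (hη : 0 < η) :
    ∃ r : ℝ, 0 < r ∧
      μ (Metric.thickening r A \ (Metric.thickening r Aᶜ)ᶜ) < ENNReal.ofReal η := by
  set D : ℕ → Set X := fun k =>
    Metric.thickening (1 / (k + 1)) A \ (Metric.thickening (1 / (k + 1)) Aᶜ)ᶜ with hD
  have hDm : ∀ k, MeasurableSet (D k) := fun k =>
    (Metric.isOpen_thickening.measurableSet).diff
      (Metric.isOpen_thickening.measurableSet.compl)
  have hanti : Antitone D := by
    intro k k' hkk'
    have hrr : (1 : ℝ) / (k' + 1) ≤ 1 / (k + 1) := by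
      apply div_le_div_of_nonneg_left one_pos.le (by positivity)
      exact_mod_cast Nat.succ_le_succ hkk'
    exact Set.diff_subset_diff (Metric.thickening_mono hrr A)
      (Set.compl_subset_compl.2 (Metric.thickening_mono hrr Aᶜ))
  have hinter : (⋂ k, D k) ⊆ frontier A := by
    intro x hx
    have hx' : ∀ k : ℕ, x ∈ D k := Set.mem_iInter.1 hx
    have hcl : ∀ (s : Set X), (∀ k : ℕ, x ∈ Metric.thickening (1 / (k + 1)) s) →
        x ∈ closure s := by
      intro s hs
      rw [EMetric.mem_closure_iff_infEdist_zero]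
      by_contra h0
      obtain ⟨n, hn⟩ := ENNReal.exists_inv_nat_lt h0
      have h1 := (Metric.mem_thickening_iff_infEdist_lt).1 (hs n)
      have h2 : ENNReal.ofReal (1 / ((n : ℝ) + 1)) ≤ ((n : ENNReal))⁻¹ := by
        rw [one_div, ENNReal.ofReal_inv_of_pos (by positivity)]
        have h3 : ENNReal.ofReal ((n:ℝ) + 1) = ((n : ENNReal) + 1) := by
          rw [ENNReal.ofReal_add (Nat.cast_nonneg n) one_pos.le, ENNReal.ofReal_natCast,
            ENNReal.ofReal_one]
        rw [h3]
        exact ENNReal.inv_le_inv.2 (le_add_of_nonneg_right zero_le_one)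
      exact absurd (lt_of_lt_of_le h1 (h2.trans hn.le)) (lt_irrefl _)
    rw [frontier_eq_closure_inter_closure]
    refine ⟨hcl A (fun k => (hx' k).1), hcl Aᶜ (fun k => ?_)⟩
    have := (hx' k).2
    simpa using this
  have hμD : Filter.Tendsto (μ ∘ D) Filter.atTop (nhds (μ (⋂ k, D k))) :=
    MeasureTheory.tendsto_measure_iInter_atTop
      (fun k => (hDm k).nullMeasurableSet) hanti ⟨0, measure_ne_top _ _⟩
  have hμ0 : μ (⋂ k, D k) = 0 :=
    le_antisymm (le_trans (measure_mono hinter) hfr.le) zero_le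
  rw [hμ0] at hμD
  have hev : ∀ᶠ k in Filter.atTop, μ (D k) < ENNReal.ofReal η := by
    refine hμD.eventually_lt_const ?_
    simpa using ENNReal.ofReal_pos.2 hη
  obtain ⟨k, hk⟩ := hev.exists
  exact ⟨1 / (k + 1), by positivity, hk⟩

end Stmt10Aux

open MeasureTheory Stmt10Aux

set_option maxHeartbeats 2000000 in
/-- **Lemma 5.4.** -/
theorem stmt10 {X : Type*} [MetricSpace X] [SigmaCompactSpace X]
    [MeasurableSpace X] [BorelSpace X]
    (μ : Measure X) [IsProbabilityMeasure μ]
    (S : ℝ → X → X)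
    (hS0 : ∀ x, S 0 x = x)
    (hSadd : ∀ t s : ℝ, ∀ x, S (t + s) x = S t (S s x))
    (hSjm : Measurable fun p : ℝ × X => S p.1 p.2)
    (hSmp : ∀ t : ℝ, MeasurePreserving (S t) μ μ)
    (hSerg : ∀ E : Set X, MeasurableSet E → (∀ t : ℝ, S t ⁻¹' E = E) →
      μ E = 0 ∨ μ E = 1)
    -- the almost-continuity condition (15)
    (hAC : ∀ ε : ℝ, 0 < ε → ∃ Xe : Set X, MeasurableSet Xe ∧
      μ Xe > ENNReal.ofReal (1 - ε) ∧
      ∀ ε' : ℝ, 0 < ε' → ∃ ε₁ : ℝ, 0 < ε₁ ∧ ∀ x ∈ Xe, ∀ t t' : ℝ,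
        t ∈ Set.Icc (-ε₁) ε₁ → t' ∈ Set.Icc (-ε₁) ε₁ → dist (S t x) (S t' x) < ε')
    {Y : Type*} [MeasurableSpace Y] [StandardBorelSpace Y]
    (ν : Measure Y) [IsProbabilityMeasure ν]
    (Tf : ℝ → Y → Y)
    (hT0 : ∀ y, Tf 0 y = y)
    (hTadd : ∀ t s : ℝ, ∀ y, Tf (t + s) y = Tf t (Tf s y))
    (hTjm : Measurable fun p : ℝ × Y => Tf p.1 p.2)
    (hTmp : ∀ t : ℝ, MeasurePreserving (Tf t) ν ν)
    (hTerg : ∀ E : Set Y, MeasurableSet E → (∀ t : ℝ, Tf t ⁻¹' E = E) →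
      ν E = 0 ∨ ν E = 1)
    (ρ : Measure (X × Y)) [IsProbabilityMeasure ρ]
    (hmarg1 : ρ.map Prod.fst = μ) (hmarg2 : ρ.map Prod.snd = ν)
    (hinv : ∀ t : ℝ, MeasurePreserving (Prod.map (S t) (Tf t)) ρ ρ)
    (herg : Ergodic (Prod.map (S 1) (Tf 1)) ρ)
    (P : Set ℝ) (hPne : P.Nonempty) (hPc : IsCompact P)
    (A : Set X) (hA : MeasurableSet A) (hfr : μ (frontier A) = 0)
    (B : Set Y) (hB : MeasurableSet B) :
    ∀ ε δ κ : ℝ, 0 < ε → 0 < δ → 0 < κ →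
      ∃ N : ℕ, ∃ Θ : Set (X × Y), MeasurableSet Θ ∧ ρ Θ > ENNReal.ofReal (1 - δ) ∧
        ∀ M L : ℕ, N ≤ L → κ ≤ (L : ℝ) / (M : ℝ) →
          ∀ x : X, ∀ y : Y, (x, y) ∈ Θ → ∀ p ∈ P,
            |(1 / (L : ℝ)) * ∑ j ∈ Finset.Icc M (M + L),
                Set.indicator {q : X × Y | S p q.1 ∈ A ∧ q.2 ∈ B} (fun _ => (1 : ℝ))
                  (S (j : ℝ) x, Tf (j : ℝ) y)
              - (ρ {q : X × Y | S p q.1 ∈ A ∧ q.2 ∈ B}).toReal| < ε := by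
  intro ε δ κ hε hδ hκ
  classical
  have hSm : ∀ t : ℝ, Measurable (S t) := fun t =>
    hSjm.comp (measurable_const.prodMk measurable_id)
  have hTm : ∀ t : ℝ, Measurable (Tf t) := fun t =>
    hTjm.comp (measurable_const.prodMk measurable_id)
  have hRm : Measurable (Prod.map (S 1) (Tf 1)) := (hSm 1).prodMap (hTm 1)
  have hiter : ∀ (j : ℕ) (x : X) (y : Y),
      (Prod.map (S 1) (Tf 1))^[j] (x, y) = (S (j : ℝ) x, Tf (j : ℝ) y) := by
    intro j
    induction j with
    | zero => intro x y; simp [hS0, hT0]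
    | succ j ih =>
      intro x y
      rw [Function.iterate_succ_apply', ih]
      have hc : ((j + 1 : ℕ) : ℝ) = 1 + (j : ℝ) := by push_cast; ring
      rw [hc, hSadd, hTadd]
      rfl
  -- constants
  set η := min (ε / 8) (1 / 2) with hηdef
  have hη0 : 0 < η := lt_min (by positivity) (by norm_num)
  have hηε : η ≤ ε / 8 := min_le_left _ _
  have hη1 : η ≤ 1 / 2 := min_le_right _ _
  obtain ⟨r, hr0, hDsmall⟩ := exists_thickening_small μ A hfr hη0
  set Aout := Metric.thickening r A with hAoutdef
  set Ain := (Metric.thickening r Aᶜ)ᶜ with hAindef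
  have hAoutm : MeasurableSet Aout := Metric.isOpen_thickening.measurableSet
  have hAinm : MeasurableSet Ain := Metric.isOpen_thickening.measurableSet.compl
  obtain ⟨Xe, hXem, hXeμ, hXeprop⟩ := hAC η hη0
  obtain ⟨ε₁, hε₁0, hcond⟩ := hXeprop r hr0
  obtain ⟨t, htP, htcover⟩ := hPc.elim_nhds_subcover (fun p => Metric.ball p ε₁)
    (fun p _ => Metric.ball_mem_nhds p hε₁0)
  set U1 : ℝ → Set (X × Y) := fun p' => {q | S p' q.1 ∈ Aout ∧ q.2 ∈ B} with hU1def
  set U2 : ℝ → Set (X × Y) := fun p' => {q | S p' q.1 ∈ Ain ∧ q.2 ∈ B} with hU2def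
  set Er : ℝ → Set (X × Y) := fun p' => {q | S p' q.1 ∉ Xe} with hErdef
  have hU1m : ∀ p', MeasurableSet (U1 p') := fun p' =>
    (((hSm p').comp measurable_fst) hAoutm).inter (measurable_snd hB)
  have hU2m : ∀ p', MeasurableSet (U2 p') := fun p' =>
    (((hSm p').comp measurable_fst) hAinm).inter (measurable_snd hB)
  have hErm : ∀ p', MeasurableSet (Er p') := fun p' =>
    ((hSm p').comp measurable_fst) hXem.compl
  have hIndb : ∀ (U : Set (X × Y)) (q : X × Y),
      |Set.indicator U (fun _ => (1 : ℝ)) q| ≤ 1 := by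
    intro U q
    by_cases h : q ∈ U
    · rw [Set.indicator_of_mem h]; norm_num
    · rw [Set.indicator_of_notMem h]; norm_num
  have hIndm : ∀ (U : Set (X × Y)), MeasurableSet U →
      Measurable (Set.indicator U (fun _ => (1 : ℝ))) := fun U hU =>
    measurable_const.indicator hU
  have hIndint : ∀ (U : Set (X × Y)), MeasurableSet U →
      ∫ q, Set.indicator U (fun _ => (1 : ℝ)) q ∂ρ = (ρ U).toReal := by
    intro U hU
    rw [integral_indicator_const (1 : ℝ) hU, smul_eq_mul, mul_one]; rfl
  set m := min δ 1 with hmdef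
  have hm0 : 0 < m := lt_min hδ one_pos
  have hm1 : m ≤ 1 := min_le_right _ _
  have hmδ : m ≤ δ := min_le_left _ _
  set kk : ℕ := 3 * t.card + 3 with hkkdef
  have hkk0 : (0 : ℝ) < (kk : ℝ) := by positivity
  set δ' := m / (2 * (kk : ℝ)) with hδ'def
  have hδ'0 : 0 < δ' := by positivity
  have hε8 : 0 < ε / 8 := by positivity
  choose N1 Θ1 hΘ1m hΘ1μ hΘ1 using fun p' : ℝ =>
    birkhoff_window (ρ := ρ) hRm herg (hIndm _ (hU1m p')) (hIndb (U1 p')) hε8 hδ'0 hκ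
  choose N2 Θ2 hΘ2m hΘ2μ hΘ2 using fun p' : ℝ =>
    birkhoff_window (ρ := ρ) hRm herg (hIndm _ (hU2m p')) (hIndb (U2 p')) hε8 hδ'0 hκ
  choose N3 Θ3 hΘ3m hΘ3μ hΘ3 using fun p' : ℝ =>
    birkhoff_window (ρ := ρ) hRm herg (hIndm _ (hErm p')) (hIndb (Er p')) hε8 hδ'0 hκ
  set Θ : Set (X × Y) := ⋂ p' ∈ t, (Θ1 p' ∩ Θ2 p' ∩ Θ3 p') with hΘdef
  have hΘmeas : MeasurableSet Θ :=
    MeasurableSet.biInter t.countable_toSet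
      (fun p' _ => ((hΘ1m p').inter (hΘ2m p')).inter (hΘ3m p'))
  have hΘcμ : ρ Θᶜ ≤ ENNReal.ofReal (m / 2) := by
    have hcompl : Θᶜ = ⋃ p' ∈ t, (Θ1 p' ∩ Θ2 p' ∩ Θ3 p')ᶜ := by
      rw [hΘdef]
      simp only [Set.compl_iInter]
    rw [hcompl]
    calc ρ (⋃ p' ∈ t, (Θ1 p' ∩ Θ2 p' ∩ Θ3 p')ᶜ)
        ≤ ∑ p' ∈ t, ρ ((Θ1 p' ∩ Θ2 p' ∩ Θ3 p')ᶜ) := measure_biUnion_finset_le t _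
      _ ≤ ∑ p' ∈ t, ENNReal.ofReal (3 * δ') := by
          refine Finset.sum_le_sum fun p' _ => ?_
          have h1 : (Θ1 p' ∩ Θ2 p' ∩ Θ3 p')ᶜ = ((Θ1 p')ᶜ ∪ (Θ2 p')ᶜ) ∪ (Θ3 p')ᶜ := by
            rw [Set.compl_inter, Set.compl_inter]
          rw [h1]
          calc ρ (((Θ1 p')ᶜ ∪ (Θ2 p')ᶜ) ∪ (Θ3 p')ᶜ)
              ≤ ρ ((Θ1 p')ᶜ ∪ (Θ2 p')ᶜ) + ρ ((Θ3 p')ᶜ) := measure_union_le _ _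
            _ ≤ (ρ ((Θ1 p')ᶜ) + ρ ((Θ2 p')ᶜ)) + ρ ((Θ3 p')ᶜ) :=
                add_le_add_left (measure_union_le _ _) _
            _ ≤ (ENNReal.ofReal δ' + ENNReal.ofReal δ') + ENNReal.ofReal δ' :=
                add_le_add (add_le_add (hΘ1μ p') (hΘ2μ p')) (hΘ3μ p')
            _ = ENNReal.ofReal (3 * δ') := by
                rw [← ENNReal.ofReal_add hδ'0.le hδ'0.le,
                  ← ENNReal.ofReal_add (by positivity) hδ'0.le,
                  show δ' + δ' + δ' = 3 * δ' by ring]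
      _ = (t.card : ENNReal) * ENNReal.ofReal (3 * δ') := by
          rw [Finset.sum_const, nsmul_eq_mul]
      _ ≤ ENNReal.ofReal (m / 2) := by
          rw [← ENNReal.ofReal_natCast t.card,
            ← ENNReal.ofReal_mul (Nat.cast_nonneg t.card)]
          apply ENNReal.ofReal_le_ofReal
          have h1 : (t.card : ℝ) * (3 * δ') = (3 * (t.card:ℝ)) * m / (2 * (kk:ℝ)) := by
            rw [hδ'def]; ring
          rw [h1, div_le_div_iff₀ (by positivity) (by norm_num : (0:ℝ) < 2)]
          have hkkc : ((kk:ℕ) : ℝ) = 3 * (t.card:ℝ) + 3 := by rw [hkkdef]; push_cast; ring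
          nlinarith [Nat.cast_nonneg (α := ℝ) t.card, hm0.le,
            mul_nonneg hm0.le (Nat.cast_nonneg (α := ℝ) t.card)]
  refine ⟨max 1 (t.sup fun p' => max (N1 p') (max (N2 p') (N3 p'))), Θ, hΘmeas, ?_, ?_⟩
  · -- ρ Θ > ofReal (1 - δ)
    have hsum : ρ Θ = 1 - ρ Θᶜ := by
      have h1 := measure_add_measure_compl (μ := ρ) hΘmeas
      rw [measure_univ] at h1
      exact ENNReal.eq_sub_of_add_eq (measure_ne_top _ _) h1
    have h2 : ENNReal.ofReal (1 - m / 2) ≤ ρ Θ := by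
      rw [hsum]
      have h3 : ENNReal.ofReal (1 - m / 2) = 1 - ENNReal.ofReal (m / 2) := by
        rw [← ENNReal.ofReal_one, ← ENNReal.ofReal_sub 1 (by positivity)]
      rw [h3]
      exact tsub_le_tsub_left hΘcμ 1
    refine lt_of_lt_of_le ?_ h2
    rw [ENNReal.ofReal_lt_ofReal_iff (by linarith)]
    linarith
  · intro M L hNL hκL x y hxy p hp
    have hmem := htcover hp
    rw [Set.mem_iUnion₂] at hmem
    obtain ⟨p', hp't, hpball⟩ := hmem
    have hpp' : |p - p'| < ε₁ := by
      rw [← Real.dist_eq]; exact Metric.mem_ball.1 hpball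
    have hzmem := Set.mem_iInter₂.1 hxy p' hp't
    have hz1 : (x, y) ∈ Θ1 p' := hzmem.1.1
    have hz2 : (x, y) ∈ Θ2 p' := hzmem.1.2
    have hz3 : (x, y) ∈ Θ3 p' := hzmem.2
    have hNsup : max (N1 p') (max (N2 p') (N3 p'))
        ≤ t.sup fun p' => max (N1 p') (max (N2 p') (N3 p')) :=
      Finset.le_sup (f := fun p' => max (N1 p') (max (N2 p') (N3 p'))) hp't
    have hN1L : N1 p' ≤ L :=
      le_trans (le_trans (le_max_left _ _) hNsup) (le_trans (le_max_right _ _) hNL)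
    have hN2L : N2 p' ≤ L :=
      le_trans (le_trans (le_trans (le_max_left _ _) (le_max_right _ _)) hNsup)
        (le_trans (le_max_right _ _) hNL)
    have hN3L : N3 p' ≤ L :=
      le_trans (le_trans (le_trans (le_max_right _ _) (le_max_right _ _)) hNsup)
        (le_trans (le_max_right _ _) hNL)
    have hW1 := hΘ1 p' M L hN1L hκL (x, y) hz1
    have hW2 := hΘ2 p' M L hN2L hκL (x, y) hz2
    have hW3 := hΘ3 p' M L hN3L hκL (x, y) hz3
    rw [hIndint _ (hU1m p')] at hW1
    rw [hIndint _ (hU2m p')] at hW2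
    rw [hIndint _ (hErm p')] at hW3
    set Up := {q : X × Y | S p q.1 ∈ A ∧ q.2 ∈ B} with hUpdef
    -- key distance estimate
    have hkey : ∀ q : X × Y, S p' q.1 ∈ Xe → dist (S p q.1) (S p' q.1) < r := by
      intro q hq
      have habs := abs_lt.1 hpp'
      have h2 := hcond (S p' q.1) hq (p - p') 0
        ⟨by linarith [habs.1], by linarith [habs.2]⟩
        ⟨by linarith, by linarith⟩
      rw [hS0] at h2
      have h0 : S (p - p') (S p' q.1) = S p q.1 := by
        rw [← hSadd]
        norm_num
      rw [h0] at h2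
      exact h2
    have himp : ∀ q : X × Y, S p' q.1 ∈ Xe →
        ((S p q.1 ∈ A → S p' q.1 ∈ Aout) ∧ (S p' q.1 ∈ Ain → S p q.1 ∈ A)) := by
      intro q hq
      have hd := hkey q hq
      constructor
      · intro hqa
        exact Metric.mem_thickening_iff.2 ⟨S p q.1, hqa, by rw [dist_comm]; exact hd⟩
      · intro hqin
        by_contra hqA
        exact hqin (Metric.mem_thickening_iff.2 ⟨S p q.1, hqA, by rw [dist_comm]; exact hd⟩)
    have hge0 : ∀ (U : Set (X × Y)) (q : X × Y),
        0 ≤ Set.indicator U (fun _ => (1 : ℝ)) q := fun U q =>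
      Set.indicator_nonneg (fun _ _ => one_pos.le) q
    have hle1 : ∀ (U : Set (X × Y)) (q : X × Y),
        Set.indicator U (fun _ => (1 : ℝ)) q ≤ 1 := by
      intro U q
      by_cases h : q ∈ U
      · rw [Set.indicator_of_mem h]
      · rw [Set.indicator_of_notMem h]; norm_num
    have hsand : ∀ q : X × Y,
        (Set.indicator (U2 p') (fun _ => (1 : ℝ)) q
            - Set.indicator (Er p') (fun _ => (1 : ℝ)) q
          ≤ Set.indicator Up (fun _ => (1 : ℝ)) q)
        ∧ Set.indicator Up (fun _ => (1 : ℝ)) q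
          ≤ Set.indicator (U1 p') (fun _ => (1 : ℝ)) q
            + Set.indicator (Er p') (fun _ => (1 : ℝ)) q := by
      intro q
      by_cases hq : S p' q.1 ∈ Xe
      · have hEq : Set.indicator (Er p') (fun _ => (1 : ℝ)) q = 0 :=
          Set.indicator_of_notMem (show q ∉ Er p' from fun h => h hq) _
        obtain ⟨himp1, himp2⟩ := himp q hq
        constructor
        · rw [hEq, sub_zero]
          by_cases h2 : q ∈ U2 p'
          · have hU : q ∈ Up := ⟨himp2 h2.1, h2.2⟩
            rw [Set.indicator_of_mem h2, Set.indicator_of_mem hU]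
          · rw [Set.indicator_of_notMem h2]
            exact hge0 Up q
        · rw [hEq, add_zero]
          by_cases hU : q ∈ Up
          · have h1 : q ∈ U1 p' := ⟨himp1 hU.1, hU.2⟩
            rw [Set.indicator_of_mem hU, Set.indicator_of_mem h1]
          · rw [Set.indicator_of_notMem hU]
            exact hge0 _ q
      · have hEq : Set.indicator (Er p') (fun _ => (1 : ℝ)) q = 1 :=
          Set.indicator_of_mem (show q ∈ Er p' from hq) _
        constructor
        · rw [hEq]
          linarith [hle1 (U2 p') q, hge0 Up q]
        · rw [hEq]
          linarith [hle1 Up q, hge0 (U1 p') q]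
    -- measure comparisons
    have hmargX : ∀ (s : ℝ) (W : Set X), MeasurableSet W →
        ρ {q : X × Y | S s q.1 ∈ W} = μ W := by
      intro s W hW
      have h1 : {q : X × Y | S s q.1 ∈ W} = Prod.fst ⁻¹' (S s ⁻¹' W) := rfl
      rw [h1, ← Measure.map_apply measurable_fst ((hSm s) hW), hmarg1]
      exact (hSmp s).measure_preimage hW.nullMeasurableSet
    set Dq := {q : X × Y | S p' q.1 ∈ Aout \ Ain} with hDqdef
    have hErμ : ρ (Er p') ≤ ENNReal.ofReal η := by
      have h1 : Er p' = {q : X × Y | S p' q.1 ∈ Xeᶜ} := rfl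
      rw [h1, hmargX p' Xeᶜ hXem.compl, prob_compl_eq_one_sub hXem]
      calc (1 : ENNReal) - μ Xe ≤ 1 - ENNReal.ofReal (1 - η) := tsub_le_tsub_left hXeμ.le 1
        _ = ENNReal.ofReal η := by
            rw [← ENNReal.ofReal_one, ← ENNReal.ofReal_sub 1 (by linarith : (0:ℝ) ≤ 1 - η)]
            norm_num
    have hDμ : ρ Dq ≤ ENNReal.ofReal η := by
      rw [hDqdef, hmargX p' (Aout \ Ain) (hAoutm.diff hAinm)]
      exact hDsmall.le
    have hι1 : U1 p' ⊆ Up ∪ Er p' ∪ Dq := by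
      intro q hq
      by_cases hqe : S p' q.1 ∈ Xe
      · by_cases hqin : S p' q.1 ∈ Ain
        · exact Or.inl (Or.inl ⟨(himp q hqe).2 hqin, hq.2⟩)
        · exact Or.inr ⟨hq.1, hqin⟩
      · exact Or.inl (Or.inr hqe)
    have hι2 : Up ⊆ U2 p' ∪ Er p' ∪ Dq := by
      intro q hq
      by_cases hqe : S p' q.1 ∈ Xe
      · by_cases hqin : S p' q.1 ∈ Ain
        · exact Or.inl (Or.inl ⟨hqin, hq.2⟩)
        · exact Or.inr ⟨(himp q hqe).1 hq.1, hqin⟩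
      · exact Or.inl (Or.inr hqe)
    have hfin : ∀ s : Set (X × Y), ρ s ≠ ⊤ := fun s => measure_ne_top ρ s
    have hcE : (ρ (Er p')).toReal ≤ η := ENNReal.toReal_le_of_le_ofReal hη0.le hErμ
    have hcD : (ρ Dq).toReal ≤ η := ENNReal.toReal_le_of_le_ofReal hη0.le hDμ
    have htoReal3 : ∀ s1 s2 s3 : Set (X × Y), s1 ⊆ s2 ∪ s3 ∪ Dq →
        (ρ s1).toReal ≤ (ρ s2).toReal + (ρ s3).toReal + (ρ Dq).toReal := by
      intro s1 s2 s3 hsub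
      have h1 : ρ s1 ≤ ρ s2 + ρ s3 + ρ Dq :=
        le_trans (measure_mono hsub)
          (le_trans (measure_union_le _ _) (add_le_add_left (measure_union_le _ _) _))
      have h2 := ENNReal.toReal_mono
        (ENNReal.add_ne_top.2 ⟨ENNReal.add_ne_top.2 ⟨hfin _, hfin _⟩, hfin _⟩) h1
      rw [ENNReal.toReal_add (ENNReal.add_ne_top.2 ⟨hfin _, hfin _⟩) (hfin _),
        ENNReal.toReal_add (hfin _) (hfin _)] at h2
      exact h2
    have hc1 : (ρ (U1 p')).toReal ≤ (ρ Up).toReal + η + η := by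
      have := htoReal3 (U1 p') Up (Er p') hι1
      linarith
    have hc2 : (ρ Up).toReal ≤ (ρ (U2 p')).toReal + η + η := by
      have := htoReal3 Up (U2 p') (Er p') hι2
      linarith
    -- rewrite the goal sum through iterates
    have hL1 : 1 ≤ L := le_trans (le_max_left _ _) hNL
    have hLr : (0 : ℝ) < L := by exact_mod_cast hL1
    have hgoal_eq : ∑ j ∈ Finset.Icc M (M + L),
        Set.indicator Up (fun _ => (1 : ℝ)) (S (j : ℝ) x, Tf (j : ℝ) y)
        = ∑ j ∈ Finset.Icc M (M + L),
          Set.indicator Up (fun _ => (1 : ℝ)) ((Prod.map (S 1) (Tf 1))^[j] (x, y)) :=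
      Finset.sum_congr rfl fun j _ => by rw [hiter j x y]
    rw [hgoal_eq]
    set avgU := (1 / (L : ℝ)) * ∑ j ∈ Finset.Icc M (M + L),
      Set.indicator Up (fun _ => (1 : ℝ)) ((Prod.map (S 1) (Tf 1))^[j] (x, y)) with havgU
    set s1 := (1 / (L : ℝ)) * ∑ j ∈ Finset.Icc M (M + L),
      Set.indicator (U1 p') (fun _ => (1 : ℝ)) ((Prod.map (S 1) (Tf 1))^[j] (x, y)) with hs1
    set s2 := (1 / (L : ℝ)) * ∑ j ∈ Finset.Icc M (M + L),
      Set.indicator (U2 p') (fun _ => (1 : ℝ)) ((Prod.map (S 1) (Tf 1))^[j] (x, y)) with hs2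
    set s3 := (1 / (L : ℝ)) * ∑ j ∈ Finset.Icc M (M + L),
      Set.indicator (Er p') (fun _ => (1 : ℝ)) ((Prod.map (S 1) (Tf 1))^[j] (x, y)) with hs3
    have hup : avgU ≤ s1 + s3 := by
      have hsum_le : ∑ j ∈ Finset.Icc M (M + L),
          Set.indicator Up (fun _ => (1 : ℝ)) ((Prod.map (S 1) (Tf 1))^[j] (x, y))
          ≤ (∑ j ∈ Finset.Icc M (M + L),
              Set.indicator (U1 p') (fun _ => (1 : ℝ)) ((Prod.map (S 1) (Tf 1))^[j] (x, y)))
            + ∑ j ∈ Finset.Icc M (M + L),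
              Set.indicator (Er p') (fun _ => (1 : ℝ)) ((Prod.map (S 1) (Tf 1))^[j] (x, y)) := by
        rw [← Finset.sum_add_distrib]
        exact Finset.sum_le_sum fun j _ => (hsand _).2
      have := mul_le_mul_of_nonneg_left hsum_le (by positivity : (0:ℝ) ≤ 1 / (L : ℝ))
      rw [havgU, hs1, hs3]
      linarith [this]
    have hlo : s2 - s3 ≤ avgU := by
      have hsum_le : (∑ j ∈ Finset.Icc M (M + L),
            Set.indicator (U2 p') (fun _ => (1 : ℝ)) ((Prod.map (S 1) (Tf 1))^[j] (x, y)))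
          - ∑ j ∈ Finset.Icc M (M + L),
              Set.indicator (Er p') (fun _ => (1 : ℝ)) ((Prod.map (S 1) (Tf 1))^[j] (x, y))
          ≤ ∑ j ∈ Finset.Icc M (M + L),
              Set.indicator Up (fun _ => (1 : ℝ)) ((Prod.map (S 1) (Tf 1))^[j] (x, y)) := by
        rw [← Finset.sum_sub_distrib]
        exact Finset.sum_le_sum fun j _ => (hsand _).1
      have := mul_le_mul_of_nonneg_left hsum_le (by positivity : (0:ℝ) ≤ 1 / (L : ℝ))
      rw [havgU, hs2, hs3]
      linarith [this]
    -- final numeric combination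
    have hW1' := abs_lt.1 hW1
    have hW2' := abs_lt.1 hW2
    have hW3' := abs_lt.1 hW3
    rw [abs_lt]
    constructor
    · -- lower bound
      have h1 : s2 > (ρ (U2 p')).toReal - ε / 8 := by linarith [hW2'.1]
      have h2 : s3 < (ρ (Er p')).toReal + ε / 8 := by linarith [hW3'.2]
      have h4 : (0:ℝ) ≤ (ρ (U2 p')).toReal := ENNReal.toReal_nonneg
      nlinarith [hlo, hc2, hcE, hηε, hη0]
    · -- upper bound
      have h1 : s1 < (ρ (U1 p')).toReal + ε / 8 := by linarith [hW1'.2]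
      have h2 : s3 < (ρ (Er p')).toReal + ε / 8 := by linarith [hW3'.2]
      nlinarith [hup, hc1, hcE, hηε, hη0]
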